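/- arXiv:2601.12701 — 6 statements merged into one kernel-verified Lean document; each statement's English description precedes it below -/
import Mathlib

section
/- Let V be a set with edge costs c : V × V → ℝ that are nonnegative and satisfy the triangle inequality c(a, b') ≤ c(a, b) + c(b, b') for all a, b, b' ∈ V. Let v_1, …, v_N (N ≥ 3) be a sequence of vertices with per-position probabilities p_1, …, p_N ∈ [0, 1], and suppose 2 ≤ k ≤ N−1 and p_k = 0. Then deleting position k does not increase the expected path cost: ∑_{i=1}^{N'−1} q'_i · c(w_i, w_{i+1}) ≤ ∑_{i=1}^{N−1} q_i · c(v_i, v_{i+1}), where (w_1, …, w_{N'}) = (v_1, …, v_{k−1}, v_{k+1}, …, v_N) with the corresponding probabilities (p_1, …, p_{k−1}, p_{k+1}, …, p_N), q_i := ∏_{j=1}^{i} (1 − p_j), and q'_i is the analogous prefix product for the shortened sequence. -/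
/-- With nonnegative edge costs satisfying the triangle
inequality, for a sequence `v 1, …, v N` (`N ≥ 3`) with per-position
probabilities `p j ∈ [0,1]`, if `2 ≤ k ≤ N - 1` and `p k = 0`, then deleting
position `k` (yielding the sequence `w` with probabilities `p'`) does not
increase the expected path cost. -/
theorem cutshort_zero_prob {V : Type*} (c : V → V → ℝ)
    (hc0 : ∀ a b, 0 ≤ c a b)
    (htri : ∀ a b b', c a b' ≤ c a b + c b b')
    (N : ℕ) (hN : 3 ≤ N) (v : ℕ → V) (p : ℕ → ℝ)
    (hp : ∀ j, 1 ≤ j → j ≤ N → 0 ≤ p j ∧ p j ≤ 1)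
    (k : ℕ) (hk1 : 2 ≤ k) (hk2 : k ≤ N - 1) (hpk : p k = 0)
    (w : ℕ → V) (hw : ∀ i, w i = if i < k then v i else v (i + 1))
    (p' : ℕ → ℝ) (hp' : ∀ i, p' i = if i < k then p i else p (i + 1)) :
    (∑ i ∈ Finset.Icc 1 (N - 2),
        (∏ j ∈ Finset.Icc 1 i, (1 - p' j)) * c (w i) (w (i + 1)))
    ≤ ∑ i ∈ Finset.Icc 1 (N - 1),
        (∏ j ∈ Finset.Icc 1 i, (1 - p j)) * c (v i) (v (i + 1)) := by
  have hkN : k + 1 ≤ N := by omega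
  have hIcc : ∀ m : ℕ, Finset.Icc 1 m = Finset.Ioc 0 m := by
    intro m; ext x; simp [Nat.lt_iff_add_one_le]
  -- abbreviations
  set f : ℕ → ℝ := fun i => (∏ j ∈ Finset.Ioc 0 i, (1 - p j)) * c (v i) (v (i + 1)) with hf
  set g : ℕ → ℝ := fun i => (∏ j ∈ Finset.Ioc 0 i, (1 - p' j)) * c (w i) (w (i + 1)) with hg
  have hrw : (∑ i ∈ Finset.Icc 1 (N - 2),
        (∏ j ∈ Finset.Icc 1 i, (1 - p' j)) * c (w i) (w (i + 1)))
      = ∑ i ∈ Finset.Ioc 0 (N - 2), g i := by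
    rw [hIcc]; apply Finset.sum_congr rfl; intro i _; rw [hIcc]
  have hrw2 : (∑ i ∈ Finset.Icc 1 (N - 1),
        (∏ j ∈ Finset.Icc 1 i, (1 - p j)) * c (v i) (v (i + 1)))
      = ∑ i ∈ Finset.Ioc 0 (N - 1), f i := by
    rw [hIcc]; apply Finset.sum_congr rfl; intro i _; rw [hIcc]
  rw [hrw, hrw2]
  have hq'low : ∀ m, m < k → (∏ j ∈ Finset.Ioc 0 m, (1 - p' j))
      = ∏ j ∈ Finset.Ioc 0 m, (1 - p j) := by
    intro m hm
    apply Finset.prod_congr rfl; intro j hj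
    simp only [Finset.mem_Ioc] at hj
    rw [hp' j, if_pos (by omega)]
  have hsingle : ∀ m : ℕ, Finset.Ioc m (m + 1) = {m + 1} := by
    intro m; rw [Nat.Ioc_succ_singleton]
  have hqk : (∏ j ∈ Finset.Ioc 0 k, (1 - p j)) = ∏ j ∈ Finset.Ioc 0 (k - 1), (1 - p j) := by
    rw [← Finset.prod_Ioc_consecutive _ (Nat.zero_le (k - 1)) (by omega : k - 1 ≤ k)]
    have h1 : Finset.Ioc (k - 1) k = {k} := by
      have := hsingle (k - 1); rw [show k - 1 + 1 = k by omega] at this; exact this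
    rw [h1, Finset.prod_singleton, hpk]; ring
  have hq'high : ∀ m, k ≤ m → (∏ j ∈ Finset.Ioc 0 m, (1 - p' j))
      = ∏ j ∈ Finset.Ioc 0 (m + 1), (1 - p j) := by
    intro m hm
    rw [← Finset.prod_Ioc_consecutive (fun j => 1 - p' j) (Nat.zero_le (k - 1)) (by omega : k - 1 ≤ m)]
    rw [← Finset.prod_Ioc_consecutive (fun j => 1 - p j) (Nat.zero_le k) (by omega : k ≤ m + 1)]
    rw [hqk]
    congr 1
    · exact hq'low _ (by omega)
    · have hmap : Finset.Ioc k (m + 1) = Finset.map (addRightEmbedding 1) (Finset.Ioc (k - 1) m) := by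
        rw [Finset.map_add_right_Ioc]; congr 1; omega
      rw [hmap, Finset.prod_map]
      apply Finset.prod_congr rfl; intro j hj
      simp only [Finset.mem_Ioc] at hj
      simp only [addRightEmbedding_apply]
      rw [hp' j, if_neg (by omega)]
  have hqpos : 0 ≤ ∏ j ∈ Finset.Ioc 0 (k - 1), (1 - p j) := by
    apply Finset.prod_nonneg; intro j hj
    simp only [Finset.mem_Ioc] at hj
    have := hp j (by omega) (by omega)
    linarith [this.2]
  -- split sums
  have hsplitL : ∑ i ∈ Finset.Ioc 0 (N - 2), g i
      = (∑ i ∈ Finset.Ioc 0 (k - 2), g i) + g (k - 1) + ∑ i ∈ Finset.Ioc (k - 1) (N - 2), g i := by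
    rw [← Finset.sum_Ioc_consecutive g (Nat.zero_le (k - 1)) (by omega : k - 1 ≤ N - 2)]
    rw [← Finset.sum_Ioc_consecutive g (Nat.zero_le (k - 2)) (by omega : k - 2 ≤ k - 1)]
    have h1 : Finset.Ioc (k - 2) (k - 1) = {k - 1} := by
      have := hsingle (k - 2); rw [show k - 2 + 1 = k - 1 by omega] at this; exact this
    rw [h1, Finset.sum_singleton]
  have hsplitR : ∑ i ∈ Finset.Ioc 0 (N - 1), f i
      = (∑ i ∈ Finset.Ioc 0 (k - 2), f i) + (f (k - 1) + f k) + ∑ i ∈ Finset.Ioc k (N - 1), f i := by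
    rw [← Finset.sum_Ioc_consecutive f (Nat.zero_le k) (by omega : k ≤ N - 1)]
    rw [← Finset.sum_Ioc_consecutive f (Nat.zero_le (k - 2)) (by omega : k - 2 ≤ k)]
    have h1 : Finset.Ioc (k - 2) k = {k - 1, k} := by
      ext x; simp; omega
    rw [h1]
    rw [Finset.sum_insert (by simp only [Finset.mem_singleton]; omega), Finset.sum_singleton]
  rw [hsplitL, hsplitR]
  have e1 : ∑ i ∈ Finset.Ioc 0 (k - 2), g i = ∑ i ∈ Finset.Ioc 0 (k - 2), f i := by
    apply Finset.sum_congr rfl; intro i hi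
    simp only [Finset.mem_Ioc] at hi
    simp only [hg, hf]
    rw [hq'low i (by omega), hw i, if_pos (by omega), hw (i + 1), if_pos (by omega)]
  have e2 : g (k - 1) ≤ f (k - 1) + f k := by
    simp only [hg, hf]
    rw [hq'low (k - 1) (by omega), hw (k - 1), if_pos (by omega), hw (k - 1 + 1),
      if_neg (by omega), hqk, show k - 1 + 1 = k by omega]
    calc (∏ j ∈ Finset.Ioc 0 (k - 1), (1 - p j)) * c (v (k - 1)) (v (k + 1))
        ≤ (∏ j ∈ Finset.Ioc 0 (k - 1), (1 - p j)) * (c (v (k - 1)) (v k) + c (v k) (v (k + 1))) :=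
          mul_le_mul_of_nonneg_left (htri _ _ _) hqpos
      _ = _ := by ring
  have e3 : ∑ i ∈ Finset.Ioc (k - 1) (N - 2), g i = ∑ i ∈ Finset.Ioc k (N - 1), f i := by
    have hmap : Finset.Ioc k (N - 1) = Finset.map (addRightEmbedding 1) (Finset.Ioc (k - 1) (N - 2)) := by
      rw [Finset.map_add_right_Ioc]; congr 1 <;> omega
    rw [hmap, Finset.sum_map]
    apply Finset.sum_congr rfl; intro i hi
    simp only [Finset.mem_Ioc] at hi
    simp only [addRightEmbedding_apply, hg, hf]
    rw [hq'high i (by omega), hw i, if_neg (by omega), hw (i + 1), if_neg (by omega)]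
  rw [e1, e3]
  linarith [e2]
end

section
/- Let V be a finite type with at least two elements, let c : V → V → ℝ be nonnegative, and let p : V → ℝ satisfy 0 ≤ p(v) < 1 for all v. Define γ : V → ℕ → ℝ by γ(v, 0) = 0 and γ(v, i+1) = min_{u ≠ v} (1 − p(v)) · (c(v, u) + γ(u, i)). Then for every k ≥ 0 and every sequence u_0, u_1, …, u_k of vertices with u_{i+1} ≠ u_i for each 0 ≤ i ≤ k−1, one has γ(u_0, k) ≤ ∑_{i=0}^{k−1} (∏_{j=0}^{i} (1 − p(u_j))) · c(u_i, u_{i+1}). -/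
/-- Let `V` be a finite type with at least two elements, `c`
nonnegative edge costs and `0 ≤ p v < 1`. Let `γ` be the RPT* heuristic table:
`γ v 0 = 0` and `γ v (i+1) = min_{u ≠ v} (1 - p v) * (c v u + γ u i)`.
Then for every `k` and every walk `u 0, …, u k` with consecutive vertices
distinct, `γ (u 0) k` is a lower bound on the expected cost of the walk. -/
theorem gamma_le_walk_cost {V : Type*} [Fintype V] [DecidableEq V] [Nontrivial V]
    (c : V → V → ℝ) (hc : ∀ a b, 0 ≤ c a b)
    (p : V → ℝ) (hp : ∀ v, 0 ≤ p v ∧ p v < 1)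
    (γ : V → ℕ → ℝ)
    (hγ0 : ∀ v, γ v 0 = 0)
    (hγ : ∀ (v : V) (i : ℕ) (hne : (Finset.univ.erase v).Nonempty),
      γ v (i + 1)
        = (Finset.univ.erase v).inf' hne (fun u => (1 - p v) * (c v u + γ u i)))
    (k : ℕ) (u : ℕ → V) (hu : ∀ i < k, u (i + 1) ≠ u i) :
    γ (u 0) k ≤ ∑ i ∈ Finset.range k,
        (∏ j ∈ Finset.range (i + 1), (1 - p (u j))) * c (u i) (u (i + 1)) := by
  induction k generalizing u with
  | zero => simp [hγ0]
  | succ k ih =>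
    have hne : (Finset.univ.erase (u 0)).Nonempty := by
      obtain ⟨w, hw⟩ := exists_ne (u 0)
      exact ⟨w, Finset.mem_erase.mpr ⟨hw, Finset.mem_univ w⟩⟩
    have hmem : u 1 ∈ Finset.univ.erase (u 0) :=
      Finset.mem_erase.mpr ⟨hu 0 (Nat.succ_pos k), Finset.mem_univ _⟩
    have h1 : γ (u 0) (k + 1) ≤ (1 - p (u 0)) * (c (u 0) (u 1) + γ (u 1) k) := by
      rw [hγ (u 0) k hne]
      exact Finset.inf'_le _ hmem
    have hIH : γ (u 1) k ≤ ∑ i ∈ Finset.range k,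
        (∏ j ∈ Finset.range (i + 1), (1 - p (u (j + 1)))) * c (u (i + 1)) (u (i + 2)) := by
      exact ih (fun n => u (n + 1)) (fun i hi => hu (i + 1) (Nat.succ_lt_succ hi))
    have hpos : 0 ≤ 1 - p (u 0) := by linarith [(hp (u 0)).2]
    calc γ (u 0) (k + 1) ≤ (1 - p (u 0)) * (c (u 0) (u 1) + γ (u 1) k) := h1
      _ ≤ (1 - p (u 0)) * (c (u 0) (u 1) + ∑ i ∈ Finset.range k,
            (∏ j ∈ Finset.range (i + 1), (1 - p (u (j + 1)))) * c (u (i + 1)) (u (i + 2))) := by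
          apply mul_le_mul_of_nonneg_left _ hpos
          linarith
      _ = ∑ i ∈ Finset.range (k + 1),
            (∏ j ∈ Finset.range (i + 1), (1 - p (u j))) * c (u i) (u (i + 1)) := by
          rw [Finset.sum_range_succ' (fun i =>
            (∏ j ∈ Finset.range (i + 1), (1 - p (u j))) * c (u i) (u (i + 1))) k]
          rw [mul_add, Finset.mul_sum, add_comm]
          congr 1
          · apply Finset.sum_congr rfl
            intro i _
            rw [Finset.prod_range_succ' (fun j => 1 - p (u j)) (i + 1)]
            ring
          · simp
end

section
/- Let V be a finite type with at least two elements, let c : V → V → ℝ be nonnegative, and let p : V → ℝ satisfy 0 ≤ p(v) < 1 for all v. Define γ : V → ℕ → ℝ by γ(v, 0) = 0 and γ(v, i+1) = min_{u ≠ v} (1 − p(v)) · (c(v, u) + γ(u, i)). Let v ∈ V, let q̄ ≥ 0 be a real number, and let u_1, …, u_k be pairwise distinct vertices, each different from v; set u_0 := v. Then the heuristic value q̄ · γ(v, k) is at most the true expected cost-to-go of this completion: q̄ · γ(v, k) ≤ q̄ · ∑_{i=0}^{k−1} (∏_{j=0}^{i} (1 − p(u_j))) · c(u_i, u_{i+1}).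 In particular, the heuristic h(s) = (q(s)/(1 − p(v(s)))) · γ(v(s), k(s)) is admissible: it never exceeds the minimum expected cost of any path from the current vertex that visits all k unvisited vertices exactly once. -/
/-- **admissibility of the RPT* heuristic.** Let `V` be a finite
type with at least two elements, `c` nonnegative edge costs, `0 ≤ p v < 1`, and
let `γ` be the RPT* heuristic table: `γ v 0 = 0` and
`γ v (i+1) = min_{u ≠ v} (1 - p v) * (c v u + γ u i)`. Let `v` be a vertex,
`q̄ ≥ 0`, and let `u 1, …, u k` be pairwise distinct vertices, each different
from `v`, with `u 0 = v`. Then the heuristic value `q̄ * γ v k` is at most the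
true expected cost-to-go
`q̄ * ∑_{i=0}^{k-1} (∏_{j=0}^{i} (1 - p (u j))) * c (u i) (u (i+1))` of this
completion, i.e. the heuristic is admissible. -/
theorem heuristic_admissible {V : Type*} [Fintype V] [DecidableEq V] [Nontrivial V]
    (c : V → V → ℝ) (hc : ∀ a b, 0 ≤ c a b)
    (p : V → ℝ) (hp : ∀ v, 0 ≤ p v ∧ p v < 1)
    (γ : V → ℕ → ℝ)
    (hγ0 : ∀ v, γ v 0 = 0)
    (hγ : ∀ (v : V) (i : ℕ) (hne : (Finset.univ.erase v).Nonempty),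
      γ v (i + 1)
        = (Finset.univ.erase v).inf' hne (fun u => (1 - p v) * (c v u + γ u i)))
    (qbar : ℝ) (hqbar : 0 ≤ qbar)
    (v : V) (k : ℕ) (u : ℕ → V) (hu0 : u 0 = v)
    (huv : ∀ i, 1 ≤ i → i ≤ k → u i ≠ v)
    (huinj : ∀ i j, 1 ≤ i → i ≤ k → 1 ≤ j → j ≤ k → u i = u j → i = j) :
    qbar * γ v k ≤ qbar * ∑ i ∈ Finset.range k,
        (∏ j ∈ Finset.range (i + 1), (1 - p (u j))) * c (u i) (u (i + 1)) := by
  have key : ∀ (k : ℕ) (w : ℕ → V),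
      (∀ i, 1 ≤ i → i ≤ k → w i ≠ w 0) →
      (∀ i j, 1 ≤ i → i ≤ k → 1 ≤ j → j ≤ k → w i = w j → i = j) →
      γ (w 0) k ≤ ∑ i ∈ Finset.range k,
        (∏ j ∈ Finset.range (i + 1), (1 - p (w j))) * c (w i) (w (i + 1)) := by
    intro k
    induction k with
    | zero => intro w _ _; simp [hγ0]
    | succ n ih =>
      intro w hw hinj
      have hw1 : w 1 ≠ w 0 := hw 1 le_rfl (Nat.le_add_left 1 n)
      have hmem : w 1 ∈ Finset.univ.erase (w 0) := by
        simp [hw1]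
      have hne : (Finset.univ.erase (w 0)).Nonempty := ⟨w 1, hmem⟩
      have h1 : γ (w 0) (n + 1)
          ≤ (1 - p (w 0)) * (c (w 0) (w 1) + γ (w 1) n) := by
        rw [hγ (w 0) n hne]
        exact Finset.inf'_le _ hmem
      have htail : γ (w 1) n ≤ ∑ i ∈ Finset.range n,
          (∏ j ∈ Finset.range (i + 1), (1 - p (w (j + 1)))) *
            c (w (i + 1)) (w (i + 2)) := by
        have := ih (fun i => w (i + 1))
          (fun i h1i hin => by
            simpa using fun h => absurd (hinj (i + 1) 1 (by omega) (by omega)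
              le_rfl (by omega) h) (by omega))
          (fun i j h1i hin h1j hjn h => by
            have := hinj (i + 1) (j + 1) (by omega) (by omega) (by omega)
              (by omega) h
            omega)
        simpa using this
      have hp0 : 0 ≤ 1 - p (w 0) := by linarith [(hp (w 0)).2]
      calc γ (w 0) (n + 1) ≤ (1 - p (w 0)) * (c (w 0) (w 1) + γ (w 1) n) := h1
        _ ≤ (1 - p (w 0)) * (c (w 0) (w 1) + ∑ i ∈ Finset.range n,
              (∏ j ∈ Finset.range (i + 1), (1 - p (w (j + 1)))) *
                c (w (i + 1)) (w (i + 2))) := by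
            apply mul_le_mul_of_nonneg_left _ hp0
            linarith
        _ = ∑ i ∈ Finset.range (n + 1),
              (∏ j ∈ Finset.range (i + 1), (1 - p (w j))) * c (w i) (w (i + 1)) := by
            rw [Finset.sum_range_succ', mul_add, Finset.mul_sum, add_comm]
            congr 1
            · apply Finset.sum_congr rfl
              intro i _
              rw [Finset.prod_range_succ' (fun j => (1 - p (w j)))]
              ring
            · simp [mul_comm]
  have := key k u (fun i h1 h2 => by rw [hu0]; exact huv i h1 h2) huinj
  rw [hu0] at this
  exact mul_le_mul_of_nonneg_left this hqbar
end

section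
/- Let V be a set, let p : V → ℝ satisfy 0 ≤ p(v) < 1 for all v, and let c : V × V → ℝ be nonnegative and satisfy the triangle inequality c(a, b') ≤ c(a, b) + c(b, b') for all a, b, b' ∈ V. Let w = (w_1, …, w_N) be any finite sequence of vertices, possibly with repetitions, and let w' be the duplicate-free sequence obtained from w by keeping only the first occurrence of each vertex (in order). Then ξ_fv(w') ≤ ξ_fv(w), where ξ_fv(w) := ∑_{i=1}^{N−1} Q_i · c(w_i, w_{i+1}) and Q_i := ∏_{u ∈ {w_1,…,w_i}} (1 − p(u)) is the product over the set of distinct vertices among the first i entries. -/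
/-- First-visit expected cost, auxiliary: `S` is the set of vertices already
visited strictly before the current list. Each edge `c a b` is weighted by the
product of `(1 - p u)` over all distinct vertices visited so far (including
`a`). -/
noncomputable def xiFvAux {V : Type*} [DecidableEq V]
    (p : V → ℝ) (c : V → V → ℝ) : Finset V → List V → ℝ
  | _, [] => 0
  | _, [_] => 0
  | S, a :: b :: l =>
      (∏ u ∈ insert a S, (1 - p u)) * c a b + xiFvAux p c (insert a S) (b :: l)

/-- First-visit expected cost `ξ_fv` of a sequence of vertices (possibly with
repetitions): `ξ_fv(w) = ∑_{i=1}^{N-1} Q_i * c(w_i, w_{i+1})` where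
`Q_i = ∏_{u ∈ {w_1, …, w_i}} (1 - p u)` ranges over the *set* of distinct
vertices among the first `i` entries. -/
noncomputable def xiFv {V : Type*} [DecidableEq V]
    (p : V → ℝ) (c : V → V → ℝ) (w : List V) : ℝ :=
  xiFvAux p c ∅ w

/-- The duplicate-free sequence obtained from `w` by keeping only the first
occurrence of each vertex, in order. -/
def firstDedup {V : Type*} [DecidableEq V] : List V → List V
  | [] => []
  | a :: l => a :: firstDedup (l.filter (· ≠ a))
termination_by l => l.length
decreasing_by
  first
  | simpa using Nat.lt_succ_of_le ((List.length_filter_le _ _).trans_eq List.length_attach)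
  | (simp; exact (List.length_filter_le _ _).trans_eq List.length_attach)
  | (simp; exact (List.length_filter_le _ _).trans (by simp))

section Aux

variable {V : Type*} [DecidableEq V] (p : V → ℝ) (c : V → V → ℝ)

lemma xiFv_Q_nonneg (hp : ∀ v, 0 ≤ p v ∧ p v < 1) (S : Finset V) :
    0 ≤ ∏ u ∈ S, (1 - p u) :=
  Finset.prod_nonneg fun u _ => by linarith [(hp u).2]

/-- Dropping a head vertex that has already been visited does not increase
the cost. -/
lemma xiFv_drop_head (hp : ∀ v, 0 ≤ p v ∧ p v < 1) (hc0 : ∀ a b, 0 ≤ c a b)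
    {x : V} {S : Finset V} (hx : x ∈ S) (l : List V) :
    xiFvAux p c S l ≤ xiFvAux p c S (x :: l) := by
  cases l with
  | nil => simp [xiFvAux]
  | cons b r =>
    simp only [xiFvAux]
    rw [Finset.insert_eq_self.2 hx]
    have := mul_nonneg (xiFv_Q_nonneg p hp S) (hc0 x b)
    linarith

/-- Dropping the second vertex when it has already been visited (cutshort). -/
lemma xiFv_drop_second (hp : ∀ v, 0 ≤ p v ∧ p v < 1) (hc0 : ∀ a b, 0 ≤ c a b)
    (htri : ∀ a b b', c a b' ≤ c a b + c b b')
    {x a : V} {S : Finset V} (hx : x ∈ insert a S) (t : List V) :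
    xiFvAux p c S (a :: t) ≤ xiFvAux p c S (a :: x :: t) := by
  have hQ : 0 ≤ ∏ u ∈ insert a S, (1 - p u) := xiFv_Q_nonneg p hp _
  cases t with
  | nil =>
    simp only [xiFvAux]
    have := mul_nonneg hQ (hc0 a x)
    linarith
  | cons b r =>
    simp only [xiFvAux]
    rw [Finset.insert_eq_self.2 hx]
    have h1 := mul_le_mul_of_nonneg_left (htri a x b) hQ
    linarith

/-- Filtering out a vertex already in `S` does not increase the cost. -/
lemma xiFv_filter_le (hp : ∀ v, 0 ≤ p v ∧ p v < 1) (hc0 : ∀ a b, 0 ≤ c a b)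
    (htri : ∀ a b b', c a b' ≤ c a b + c b b')
    (l : List V) (S : Finset V) (x : V) (hx : x ∈ S) :
    xiFvAux p c S (l.filter (· ≠ x)) ≤ xiFvAux p c S l := by
  match l with
  | [] => simp [xiFvAux]
  | a :: t =>
    by_cases hax : a = x
    · subst hax
      have h1 : (a :: t).filter (· ≠ a) = t.filter (· ≠ a) := by simp
      rw [h1]
      calc xiFvAux p c S (t.filter (· ≠ a)) ≤ xiFvAux p c S t :=
            xiFv_filter_le hp hc0 htri t S a hx
        _ ≤ xiFvAux p c S (a :: t) := xiFv_drop_head p c hp hc0 hx t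
    · have h1 : (a :: t).filter (· ≠ x) = a :: t.filter (· ≠ x) := by
        simp [hax]
      rw [h1]
      match t with
      | [] => simp [xiFvAux]
      | b :: r =>
        by_cases hbx : b = x
        · subst hbx
          have h2 : (b :: r).filter (· ≠ b) = r.filter (· ≠ b) := by simp
          rw [h2]
          have h3 : (a :: r).filter (· ≠ b) = a :: r.filter (· ≠ b) := by
            simp [hax]
          calc xiFvAux p c S (a :: r.filter (· ≠ b))
              ≤ xiFvAux p c S (a :: r) := by
                have := xiFv_filter_le hp hc0 htri (a :: r) S b hx
                rwa [h3] at this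
            _ ≤ xiFvAux p c S (a :: b :: r) :=
                xiFv_drop_second p c hp hc0 htri (Finset.mem_insert_of_mem hx) r
        · have h2 : (b :: r).filter (· ≠ x) = b :: r.filter (· ≠ x) := by
            simp [hbx]
          rw [h2]
          simp only [xiFvAux]
          have := xiFv_filter_le hp hc0 htri (b :: r) (insert a S) x
            (Finset.mem_insert_of_mem hx)
          rw [h2] at this
          linarith
termination_by l.length
decreasing_by
  · simp
  · simp
  · simp

/-- Filtering out the head vertex from the tail does not increase the cost. -/
lemma xiFv_cons_filter_le (hp : ∀ v, 0 ≤ p v ∧ p v < 1) (hc0 : ∀ a b, 0 ≤ c a b)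
    (htri : ∀ a b b', c a b' ≤ c a b + c b b')
    (t : List V) (S : Finset V) (a : V) :
    xiFvAux p c S (a :: t.filter (· ≠ a)) ≤ xiFvAux p c S (a :: t) := by
  match t with
  | [] => simp
  | b :: r =>
    by_cases hba : b = a
    · subst hba
      have h2 : (b :: r).filter (· ≠ b) = r.filter (· ≠ b) := by simp
      rw [h2]
      calc xiFvAux p c S (b :: r.filter (· ≠ b))
          ≤ xiFvAux p c S (b :: r) := xiFv_cons_filter_le hp hc0 htri r S b
        _ ≤ xiFvAux p c S (b :: b :: r) :=
            xiFv_drop_second p c hp hc0 htri (Finset.mem_insert_self b S) r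
    · have h2 : (b :: r).filter (· ≠ a) = b :: r.filter (· ≠ a) := by simp [hba]
      rw [h2]
      simp only [xiFvAux]
      have := xiFv_filter_le p c hp hc0 htri (b :: r) (insert a S) a
        (Finset.mem_insert_self a S)
      rw [h2] at this
      linarith
termination_by t.length
decreasing_by simp

/-- Main dedup lemma, generalized over the visited set. -/
lemma xiFv_dedup_le (hp : ∀ v, 0 ≤ p v ∧ p v < 1) (hc0 : ∀ a b, 0 ≤ c a b)
    (htri : ∀ a b b', c a b' ≤ c a b + c b b')
    (l : List V) (S : Finset V) :
    xiFvAux p c S (firstDedup l) ≤ xiFvAux p c S l := by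
  match l with
  | [] => simp [firstDedup]
  | a :: t =>
    rw [firstDedup]
    have hA : xiFvAux p c S (a :: firstDedup (t.filter (· ≠ a)))
        ≤ xiFvAux p c S (a :: t.filter (· ≠ a)) := by
      cases hm : t.filter (· ≠ a) with
      | nil => simp [firstDedup]
      | cons b r =>
        have hlen : (b :: r).length ≤ t.length := by
          rw [← hm]; exact List.length_filter_le _ _
        rw [firstDedup]
        simp only [xiFvAux]
        have := xiFv_dedup_le hp hc0 htri (b :: r) (insert a S)
        rw [firstDedup] at this
        linarith
    exact hA.trans (xiFv_cons_filter_le p c hp hc0 htri t S a)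
termination_by l.length
decreasing_by simp only [List.length_cons] at hlen ⊢; omega

end Aux

/-- **iterated cutshort.** For `0 ≤ p v < 1`, nonnegative edge
costs satisfying the triangle inequality, and any finite sequence `w` of
vertices, removing all repeated visits (keeping first occurrences) does not
increase the first-visit expected cost: `ξ_fv(w') ≤ ξ_fv(w)`. -/
theorem firstDedup_xiFv_le {V : Type*} [DecidableEq V]
    (p : V → ℝ) (hp : ∀ v, 0 ≤ p v ∧ p v < 1)
    (c : V → V → ℝ) (hc0 : ∀ a b, 0 ≤ c a b)
    (htri : ∀ a b b', c a b' ≤ c a b + c b b')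
    (w : List V) :
    xiFv p c (firstDedup w) ≤ xiFv p c w := by
  exact xiFv_dedup_le p c hp hc0 htri w ∅
end

section
/- Let V be a set, let p : V → ℝ satisfy 0 ≤ p(v) < 1 for all v, and let c : V × V → ℝ be nonnegative. Let π_1 = (a_1, …, a_m) and π_2 = (b_1, …, b_n) be duplicate-free sequences of vertices ending at the same vertex (a_m = b_n), such that the vertex set of π_1 contains the vertex set of π_2 and ξ(π_1) ≤ ξ(π_2). Then for every finite sequence σ of vertices, ξ_fv(π_1 ++ σ) ≤ ξ_fv(π_2 ++ σ), where ++ denotes concatenation. -/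
/-- Expected path cost, auxiliary: `q` is the probability of not having found
the target before the current list; the edge `c a b` is weighted by
`q * (1 - p a)`. -/
noncomputable def xiAux {V : Type*} (p : V → ℝ) (c : V → V → ℝ) : ℝ → List V → ℝ
  | _, [] => 0
  | _, [_] => 0
  | q, a :: b :: l => q * (1 - p a) * c a b + xiAux p c (q * (1 - p a)) (b :: l)

/-- Expected path cost `ξ(v_1, …, v_M) = ∑_{i=1}^{M-1} q_i * c(v_i, v_{i+1})`
with `q_i = ∏_{j=1}^{i} (1 - p v_j)` (`ξ` of a single-vertex or empty path
is `0`). -/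
noncomputable def xi {V : Type*} (p : V → ℝ) (c : V → V → ℝ) (w : List V) : ℝ :=
  xiAux p c 1 w

set_option linter.unusedSectionVars false
section Aux
variable {V : Type*} [DecidableEq V] (p : V → ℝ) (c : V → V → ℝ)

lemma prod_one_sub_pos (hp : ∀ v, 0 ≤ p v ∧ p v < 1) (S : Finset V) :
    0 < ∏ u ∈ S, (1 - p u) :=
  Finset.prod_pos fun u _ => by linarith [(hp u).2]

lemma prod_one_sub_mono (hp : ∀ v, 0 ≤ p v ∧ p v < 1) {S T : Finset V} (h : S ⊆ T) :
    ∏ u ∈ T, (1 - p u) ≤ ∏ u ∈ S, (1 - p u) := by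
  rw [← Finset.prod_sdiff h]
  have h1 : ∏ u ∈ T \ S, (1 - p u) ≤ 1 :=
    Finset.prod_le_one (fun u _ => by linarith [(hp u).2]) (fun u _ => by linarith [(hp u).1])
  have h2 : 0 < ∏ u ∈ S, (1 - p u) := prod_one_sub_pos p hp S
  nlinarith

lemma xiFvAux_mono (hp : ∀ v, 0 ≤ p v ∧ p v < 1) (hc0 : ∀ a b, 0 ≤ c a b) :
    ∀ (l : List V) (S T : Finset V), S ⊆ T → xiFvAux p c T l ≤ xiFvAux p c S l := by
  intro l
  induction l with
  | nil => intro S T h; simp [xiFvAux]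
  | cons a l ih =>
    intro S T h
    cases l with
    | nil => simp [xiFvAux]
    | cons b l =>
      simp only [xiFvAux]
      have hins : insert a S ⊆ insert a T := Finset.insert_subset_insert _ h
      exact add_le_add
        (mul_le_mul_of_nonneg_right (prod_one_sub_mono p hp hins) (hc0 a b))
        (ih _ _ hins)

lemma xiFvAux_insert_head (S : Finset V) (a : V) (l : List V) :
    xiFvAux p c S (a :: l) = xiFvAux p c (insert a S) (a :: l) := by
  cases l with
  | nil => simp [xiFvAux]
  | cons b l => simp [xiFvAux, Finset.insert_idem]

lemma xiFvAux_append :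
    ∀ (w : List V) (hw : w ≠ []) (S : Finset V) (σ : List V),
      xiFvAux p c S (w ++ σ)
        = xiFvAux p c S w
          + xiFvAux p c (S ∪ w.dropLast.toFinset) (w.getLast hw :: σ) := by
  intro w
  induction w with
  | nil => intro hw; exact absurd rfl hw
  | cons a w ih =>
    intro hw S σ
    cases w with
    | nil => simp [xiFvAux]
    | cons b l =>
      have hbl : b :: l ≠ [] := by simp
      have hset : insert a S ∪ (b :: l).dropLast.toFinset
          = S ∪ (a :: b :: l).dropLast.toFinset := by
        simp only [List.dropLast_cons₂, List.toFinset_cons]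
        ext x; simp only [Finset.mem_union, Finset.mem_insert]; tauto
      calc xiFvAux p c S ((a :: b :: l) ++ σ)
          = (∏ u ∈ insert a S, (1 - p u)) * c a b
              + xiFvAux p c (insert a S) ((b :: l) ++ σ) := rfl
        _ = (∏ u ∈ insert a S, (1 - p u)) * c a b
              + (xiFvAux p c (insert a S) (b :: l)
                + xiFvAux p c (insert a S ∪ (b :: l).dropLast.toFinset)
                    ((b :: l).getLast hbl :: σ)) := by rw [ih hbl]
        _ = xiFvAux p c S (a :: b :: l)
              + xiFvAux p c (S ∪ (a :: b :: l).dropLast.toFinset)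
                  ((a :: b :: l).getLast hw :: σ) := by
            rw [hset]
            simp [xiFvAux, List.getLast_cons, add_assoc]

lemma xiFvAux_eq_xiAux :
    ∀ (w : List V) (S : Finset V), w.Nodup → (∀ x ∈ w, x ∉ S) →
      xiFvAux p c S w = xiAux p c (∏ u ∈ S, (1 - p u)) w := by
  intro w
  induction w with
  | nil => intro S _ _; simp [xiFvAux, xiAux]
  | cons a w ih =>
    intro S hnd hdisj
    cases w with
    | nil => simp [xiFvAux, xiAux]
    | cons b l =>
      have haS : a ∉ S := hdisj a (by simp)
      have hprod : ∏ u ∈ insert a S, (1 - p u) = (∏ u ∈ S, (1 - p u)) * (1 - p a) := by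
        rw [Finset.prod_insert haS, mul_comm]
      have hnd' : (b :: l).Nodup := hnd.of_cons
      have hdisj' : ∀ x ∈ b :: l, x ∉ insert a S := by
        intro x hx
        simp only [Finset.mem_insert, not_or]
        exact ⟨fun h => (List.nodup_cons.mp hnd).1 (h ▸ hx), hdisj x (List.mem_cons_of_mem _ hx)⟩
      simp only [xiFvAux, xiAux, hprod]
      rw [ih (insert a S) hnd' hdisj', hprod]

lemma insert_getLast_dropLast (w : List V) (hw : w ≠ []) :
    insert (w.getLast hw) w.dropLast.toFinset = w.toFinset := by
  conv_rhs => rw [← List.dropLast_append_getLast hw]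
  rw [List.toFinset_append]
  ext x; simp [or_comm]

end Aux

/-- Let `0 ≤ p v < 1` and `c` be nonnegative. If `π₁` and
`π₂` are duplicate-free sequences ending at the same vertex, the vertex set of
`π₁` contains that of `π₂`, and `ξ(π₁) ≤ ξ(π₂)`, then appending any completion
`σ` preserves the comparison of first-visit expected costs:
`ξ_fv(π₁ ++ σ) ≤ ξ_fv(π₂ ++ σ)`. -/
theorem dominating_prefix_append {V : Type*} [DecidableEq V]
    (p : V → ℝ) (hp : ∀ v, 0 ≤ p v ∧ p v < 1)
    (c : V → V → ℝ) (hc0 : ∀ a b, 0 ≤ c a b)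
    (π₁ π₂ : List V) (h₁ : π₁.Nodup) (h₂ : π₂.Nodup)
    (hne₁ : π₁ ≠ []) (hne₂ : π₂ ≠ [])
    (hlast : π₁.getLast hne₁ = π₂.getLast hne₂)
    (hsub : π₂.toFinset ⊆ π₁.toFinset)
    (hxi : xi p c π₁ ≤ xi p c π₂) :
    ∀ σ : List V, xiFv p c (π₁ ++ σ) ≤ xiFv p c (π₂ ++ σ) := by
  intro σ
  set v := π₂.getLast hne₂ with hv
  have hdisj : ∀ (w : List V), ∀ x ∈ w, x ∉ (∅ : Finset V) := by simp
  have head₁ : xiFvAux p c ∅ π₁ = xi p c π₁ := by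
    rw [xiFvAux_eq_xiAux p c π₁ ∅ h₁ (hdisj π₁)]; simp [xi]
  have head₂ : xiFvAux p c ∅ π₂ = xi p c π₂ := by
    rw [xiFvAux_eq_xiAux p c π₂ ∅ h₂ (hdisj π₂)]; simp [xi]
  have tail : ∀ (w : List V) (hw : w ≠ []) (hΓ : w.getLast hw = v),
      xiFvAux p c (∅ ∪ w.dropLast.toFinset) (w.getLast hw :: σ)
        = xiFvAux p c w.toFinset (v :: σ) := by
    intro w hw hΓ
    have hw' : insert v w.dropLast.toFinset = w.toFinset := by
      rw [← hΓ]; exact insert_getLast_dropLast w hw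
    rw [hΓ, Finset.empty_union, xiFvAux_insert_head, hw']
  have tmono : xiFvAux p c π₁.toFinset (v :: σ) ≤ xiFvAux p c π₂.toFinset (v :: σ) :=
    xiFvAux_mono p c hp hc0 _ _ _ hsub
  unfold xiFv
  rw [xiFvAux_append p c π₁ hne₁ ∅ σ, xiFvAux_append p c π₂ hne₂ ∅ σ,
    head₁, head₂, tail π₁ hne₁ hlast, tail π₂ hne₂ rfl]
  exact add_le_add hxi tmono
end

section
/- Let V be a finite set of vertices, let p : V → ℝ satisfy 0 ≤ p(v) < 1 for all v, and let c : V × V → ℝ be nonnegative and satisfy the triangle inequality c(a, b') ≤ c(a, b) + c(b, b') for all a, b, b' ∈ V. Let π_1 and π_2 be duplicate-free sequences of vertices ending at the same vertex, such that the vertex set A_1 of π_1 contains the vertex set A_2 of π_2 and ξ(π_1) ≤ ξ(π_2). Then for every duplicate-free sequence σ whose entries are exactly the vertices of V \ A_2 (so that π_2 ++ σ visits every vertex of V exactly once), there exists a duplicate-free sequence σ' whose entries are exactly the vertices of V \ A_1 such that ξ(π_1 ++ σ') ≤ ξ(π_2 ++ σ). Consequently, a dominated prefix cannot lead to a better full solution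 than the dominating prefix. -/
section Aux
variable {V : Type*} (p : V → ℝ) (c : V → V → ℝ)

lemma xiAux_nil (q : ℝ) : xiAux p c q ([] : List V) = 0 := rfl
lemma xiAux_single (q : ℝ) (a : V) : xiAux p c q [a] = 0 := rfl
lemma xiAux_cons_cons (q : ℝ) (a b : V) (l : List V) :
    xiAux p c q (a :: b :: l) = q * (1 - p a) * c a b + xiAux p c (q * (1 - p a)) (b :: l) := rfl

lemma xiAux_smul (α : ℝ) : ∀ (l : List V) (q : ℝ),
    xiAux p c (α * q) l = α * xiAux p c q l
  | [], q => by simp [xiAux_nil]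
  | [a], q => by simp [xiAux_single]
  | a :: b :: l, q => by
    rw [xiAux_cons_cons, xiAux_cons_cons]
    have h1 : α * q * (1 - p a) = α * (q * (1 - p a)) := by ring
    rw [h1, xiAux_smul α (b :: l) (q * (1 - p a))]
    ring

lemma xiAux_nonneg (hp : ∀ v, 0 ≤ p v ∧ p v < 1) (hc0 : ∀ a b, 0 ≤ c a b) :
    ∀ (l : List V) (q : ℝ), 0 ≤ q → 0 ≤ xiAux p c q l
  | [], q, hq => le_of_eq (xiAux_nil p c q).symm
  | [a], q, hq => le_of_eq (xiAux_single p c q a).symm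
  | a :: b :: l, q, hq => by
    rw [xiAux_cons_cons]
    have h1 : (0:ℝ) ≤ 1 - p a := by linarith [(hp a).2]
    have h2 := xiAux_nonneg hp hc0 (b :: l) (q * (1 - p a)) (mul_nonneg hq h1)
    have h3 : 0 ≤ q * (1 - p a) * c a b := mul_nonneg (mul_nonneg hq h1) (hc0 a b)
    linarith

lemma xiAux_append : ∀ (π : List V) (a : V) (σ : List V) (q : ℝ),
    xiAux p c q (π ++ a :: σ) =
      xiAux p c q (π ++ [a]) + xiAux p c (q * (π.map (fun x => 1 - p x)).prod) (a :: σ)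
  | [], a, σ, q => by simp [xiAux_single]
  | [x], a, σ, q => by simp [xiAux_cons_cons, xiAux_single]
  | x :: y :: π, a, σ, q => by
    have h := xiAux_append (y :: π) a σ (q * (1 - p x))
    simp only [List.cons_append] at h ⊢
    rw [xiAux_cons_cons, xiAux_cons_cons, h]
    have : q * (1 - p x) * ((y :: π).map (fun x => 1 - p x)).prod
        = q * ((x :: y :: π).map (fun x => 1 - p x)).prod := by
      simp [List.map_cons]; ring
    rw [this]; ring

lemma prod_one_sub_mem (hp : ∀ v, 0 ≤ p v ∧ p v < 1) :
    ∀ l : List V, 0 ≤ (l.map (fun x => 1 - p x)).prod ∧ (l.map (fun x => 1 - p x)).prod ≤ 1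
  | [] => by simp
  | x :: l => by
    obtain ⟨h0, h1⟩ := prod_one_sub_mem hp l
    have hx0 : (0:ℝ) ≤ 1 - p x := by linarith [(hp x).2]
    have hx1 : 1 - p x ≤ 1 := by linarith [(hp x).1]
    simp only [List.map_cons, List.prod_cons]
    constructor
    · exact mul_nonneg hx0 h0
    · nlinarith

lemma xiAux_skip (hp : ∀ v, 0 ≤ p v ∧ p v < 1) (hc0 : ∀ a b, 0 ≤ c a b)
    (htri : ∀ a b b', c a b' ≤ c a b + c b b') :
    ∀ (l : List V) (a b : V) (q : ℝ), 0 ≤ q →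
      (1 - p b) * xiAux p c q (a :: l) ≤
        q * (1 - p a) * c a b + xiAux p c (q * (1 - p a)) (b :: l)
  | [], a, b, q, hq => by
    have h1 : (0:ℝ) ≤ 1 - p a := by linarith [(hp a).2]
    simp only [xiAux_single]
    have : 0 ≤ q * (1 - p a) * c a b := mul_nonneg (mul_nonneg hq h1) (hc0 a b)
    linarith
  | x :: l, a, b, q, hq => by
    have ha : (0:ℝ) ≤ 1 - p a := by linarith [(hp a).2]
    have hb0 : (0:ℝ) ≤ 1 - p b := by linarith [(hp b).2]
    have hb1 : 1 - p b ≤ 1 := by linarith [(hp b).1]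
    rw [xiAux_cons_cons, xiAux_cons_cons]
    have hsm : xiAux p c (q * (1 - p a) * (1 - p b)) (x :: l)
        = (1 - p b) * xiAux p c (q * (1 - p a)) (x :: l) := by
      rw [← xiAux_smul]; ring_nf
    have htr := htri a b x
    have hq' : 0 ≤ q * (1 - p a) := mul_nonneg hq ha
    rw [hsm]
    have h1 : (1 - p b) * (q * (1 - p a)) * c a x ≤ (1 - p b) * (q * (1 - p a)) * (c a b + c b x) :=
      mul_le_mul_of_nonneg_left htr (mul_nonneg hb0 hq')
    have h2 : (1 - p b) * (q * (1 - p a)) * c a b ≤ q * (1 - p a) * c a b := by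
      nlinarith [mul_nonneg hq' (hc0 a b)]
    nlinarith

lemma xiAux_filter (hp : ∀ v, 0 ≤ p v ∧ p v < 1) (hc0 : ∀ a b, 0 ≤ c a b)
    (htri : ∀ a b b', c a b' ≤ c a b + c b b') (P : V → Bool) :
    ∀ (l : List V) (a : V) (q : ℝ), 0 ≤ q →
      ((l.filter P).map (fun x => 1 - p x)).prod *
        xiAux p c q (a :: l.filter (fun x => !P x)) ≤ xiAux p c q (a :: l)
  | [], a, q, hq => by simp
  | b :: l, a, q, hq => by
    have ha : (0:ℝ) ≤ 1 - p a := by linarith [(hp a).2]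
    have hb0 : (0:ℝ) ≤ 1 - p b := by linarith [(hp b).2]
    have hq' : 0 ≤ q * (1 - p a) := mul_nonneg hq ha
    obtain ⟨hK0, hK1⟩ := prod_one_sub_mem p hp (l.filter P)
    have hIH := xiAux_filter hp hc0 htri P l b (q * (1 - p a)) hq'
    have hcab : 0 ≤ q * (1 - p a) * c a b := mul_nonneg hq' (hc0 a b)
    by_cases hPb : P b = true
    · have hf1 : (b :: l).filter P = b :: l.filter P := by simp [hPb]
      have hf2 : (b :: l).filter (fun x => !P x) = l.filter (fun x => !P x) := by simp [hPb]
      rw [hf1, hf2, xiAux_cons_cons]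
      simp only [List.map_cons, List.prod_cons]
      have hskip := xiAux_skip p c hp hc0 htri (l.filter (fun x => !P x)) a b q hq
      -- (1 - p b) * xiAux q (a :: l') ≤ q(1-p a) c a b + xiAux q' (b :: l')
      set K := ((l.filter P).map (fun x => 1 - p x)).prod with hKdef
      set X := xiAux p c q (a :: l.filter (fun x => !P x)) with hXdef
      set Y := xiAux p c (q * (1 - p a)) (b :: l.filter (fun x => !P x)) with hYdef
      have hY0 : 0 ≤ Y := xiAux_nonneg p c hp hc0 _ _ hq'
      -- goal : (1 - p b) * K * X ≤ q(1-p a) c a b + xiAux q' (b :: l)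
      have h3 : K * ((1 - p b) * X) ≤ K * (q * (1 - p a) * c a b + Y) :=
        mul_le_mul_of_nonneg_left hskip hK0
      have h4 : K * (q * (1 - p a) * c a b) ≤ q * (1 - p a) * c a b := by
        nlinarith
      nlinarith
    · have hPb' : P b = false := by simpa using hPb
      have hf1 : (b :: l).filter P = l.filter P := by simp [hPb']
      have hf2 : (b :: l).filter (fun x => !P x) = b :: l.filter (fun x => !P x) := by
        simp [hPb']
      rw [hf1, hf2, xiAux_cons_cons, xiAux_cons_cons]
      set K := ((l.filter P).map (fun x => 1 - p x)).prod with hKdef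
      have h4 : K * (q * (1 - p a) * c a b) ≤ q * (1 - p a) * c a b := by nlinarith
      nlinarith

end Aux

lemma xiAux_eq_mul {V : Type*} (p : V → ℝ) (c : V → V → ℝ) (q : ℝ) (l : List V) :
    xiAux p c q l = q * xiAux p c 1 l := by
  rw [← xiAux_smul, mul_one]


/-- **dominance Lemma.** Let `V` be a finite set of vertices,
`0 ≤ p v < 1`, and `c` nonnegative edge costs satisfying the triangle
inequality. Let `π₁`, `π₂` be duplicate-free sequences ending at the same
vertex with `π₁.toFinset ⊇ π₂.toFinset` and `ξ(π₁) ≤ ξ(π₂)`. Then for every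
duplicate-free sequence `σ` whose entries are exactly the vertices of
`V \ π₂.toFinset` (so `π₂ ++ σ` visits every vertex exactly once), there is a
duplicate-free sequence `σ'` whose entries are exactly the vertices of
`V \ π₁.toFinset` with `ξ(π₁ ++ σ') ≤ ξ(π₂ ++ σ)`: a dominated prefix cannot
lead to a better full solution than the dominating prefix. -/
theorem dominance_lemma {V : Type*} [Fintype V] [DecidableEq V]
    (p : V → ℝ) (hp : ∀ v, 0 ≤ p v ∧ p v < 1)
    (c : V → V → ℝ) (hc0 : ∀ a b, 0 ≤ c a b)
    (htri : ∀ a b b', c a b' ≤ c a b + c b b')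
    (π₁ π₂ : List V) (h₁ : π₁.Nodup) (h₂ : π₂.Nodup)
    (hne₁ : π₁ ≠ []) (hne₂ : π₂ ≠ [])
    (hlast : π₁.getLast hne₁ = π₂.getLast hne₂)
    (hsub : π₂.toFinset ⊆ π₁.toFinset)
    (hxi : xi p c π₁ ≤ xi p c π₂)
    (σ : List V) (hσ : σ.Nodup)
    (hσset : σ.toFinset = Finset.univ \ π₂.toFinset) :
    ∃ σ' : List V, σ'.Nodup ∧ σ'.toFinset = Finset.univ \ π₁.toFinset ∧
      xi p c (π₁ ++ σ') ≤ xi p c (π₂ ++ σ) := by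
  set v := π₁.getLast hne₁ with hv
  set τ₁ := π₁.dropLast with hτ₁
  set τ₂ := π₂.dropLast with hτ₂
  have hπ₁ : τ₁ ++ [v] = π₁ := List.dropLast_append_getLast hne₁
  have hπ₂ : τ₂ ++ [v] = π₂ := by
    rw [hlast]; exact List.dropLast_append_getLast hne₂
  set P : V → Bool := fun x => decide (x ∈ π₁.toFinset) with hP
  refine ⟨σ.filter (fun x => !P x), hσ.filter _, ?_, ?_⟩
  · ext x
    have hx2 : x ∈ σ ↔ x ∉ π₂.toFinset := by
      rw [← List.mem_toFinset, hσset]; simp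
    constructor
    · intro hx
      rw [List.mem_toFinset, List.mem_filter] at hx
      simp only [hP, Bool.not_eq_true', decide_eq_false_iff_not] at hx
      simp [hx.2]
    · intro hx
      rw [Finset.mem_sdiff] at hx
      rw [List.mem_toFinset, List.mem_filter]
      refine ⟨hx2.mpr (fun h => hx.2 (hsub h)), ?_⟩
      simp only [hP, Bool.not_eq_true', decide_eq_false_iff_not]
      exact hx.2
  · -- cost inequality
    have hτ₁n : τ₁.Nodup := h₁.sublist (List.dropLast_sublist π₁)
    have hτ₂n : τ₂.Nodup := h₂.sublist (List.dropLast_sublist π₂)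
    have hfn : (σ.filter P).Nodup := hσ.filter _
    have hvπ₂ : v ∈ π₂.toFinset := by
      rw [hlast]; exact List.mem_toFinset.mpr (List.getLast_mem hne₂)
    have hvτ₂ : v ∉ τ₂.toFinset := by
      have hh := h₂; rw [← hπ₂] at hh
      have := (List.nodup_append'.mp hh).2.2
      simp only [List.mem_toFinset]
      intro hx; exact this hx (List.mem_singleton_self v)
    have hπ₁set : π₁.toFinset = insert v τ₁.toFinset := by
      rw [← hπ₁]
      simp only [List.toFinset_append, List.toFinset_cons, List.toFinset_nil,
        insert_empty_eq]
      exact (Finset.union_comm _ _).trans (Finset.insert_eq v _).symm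
    have hπ₂set : π₂.toFinset = insert v τ₂.toFinset := by
      rw [← hπ₂]
      simp only [List.toFinset_append, List.toFinset_cons, List.toFinset_nil,
        insert_empty_eq]
      exact (Finset.union_comm _ _).trans (Finset.insert_eq v _).symm
    have hσπ₂ : ∀ x ∈ σ, x ∉ π₂.toFinset := by
      intro x hx
      have : x ∈ σ.toFinset := List.mem_toFinset.mpr hx
      rw [hσset] at this
      exact (Finset.mem_sdiff.mp this).2
    have hTsub : τ₂.toFinset ∪ (σ.filter P).toFinset ⊆ τ₁.toFinset := by
      intro x hx
      rcases Finset.mem_union.mp hx with hx | hx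
      · have hx1 : x ∈ π₁.toFinset := hsub (by rw [hπ₂set]; exact Finset.mem_insert_of_mem hx)
        rw [hπ₁set] at hx1
        rcases Finset.mem_insert.mp hx1 with rfl | h
        · exact absurd hx hvτ₂
        · exact h
      · rw [List.mem_toFinset, List.mem_filter] at hx
        obtain ⟨hxσ, hxP⟩ := hx
        have hx1 : x ∈ π₁.toFinset := by simpa [hP] using hxP
        rw [hπ₁set] at hx1
        rcases Finset.mem_insert.mp hx1 with rfl | h
        · exact absurd hvπ₂ (hσπ₂ _ hxσ)
        · exact h
    have hdisj : Disjoint τ₂.toFinset (σ.filter P).toFinset := by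
      rw [Finset.disjoint_right]
      intro x hx
      rw [List.mem_toFinset, List.mem_filter] at hx
      intro hxτ
      exact hσπ₂ x hx.1 (by rw [hπ₂set]; exact Finset.mem_insert_of_mem hxτ)
    -- products
    have hQle : (τ₁.map (fun x => 1 - p x)).prod ≤
        (τ₂.map (fun x => 1 - p x)).prod * ((σ.filter P).map (fun x => 1 - p x)).prod := by
      rw [← List.prod_toFinset _ hτ₁n, ← List.prod_toFinset _ hτ₂n,
        ← List.prod_toFinset _ hfn, ← Finset.prod_union hdisj,
        ← Finset.prod_sdiff hTsub]
      have h1 : (∏ x ∈ τ₁.toFinset \ (τ₂.toFinset ∪ (σ.filter P).toFinset),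
          (1 - p x)) ≤ 1 :=
        Finset.prod_le_one (fun x _ => by linarith [(hp x).2])
          (fun x _ => by linarith [(hp x).1])
      have h2 : (0:ℝ) ≤ ∏ x ∈ τ₂.toFinset ∪ (σ.filter P).toFinset, (1 - p x) := 
        Finset.prod_nonneg (fun x _ => by linarith [(hp x).2])
      nlinarith
    -- decompose costs
    have hdec₁ : xi p c (π₁ ++ σ.filter (fun x => !P x)) =
        xi p c π₁ + (τ₁.map (fun x => 1 - p x)).prod *
          xiAux p c 1 (v :: σ.filter (fun x => !P x)) := by
      rw [xi, xi, ← hπ₁, List.append_assoc, List.singleton_append, xiAux_append, one_mul]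
      congr 1
      exact xiAux_eq_mul p c _ _
    have hdec₂ : xi p c (π₂ ++ σ) =
        xi p c π₂ + (τ₂.map (fun x => 1 - p x)).prod * xiAux p c 1 (v :: σ) := by
      rw [xi, xi, ← hπ₂, List.append_assoc, List.singleton_append, xiAux_append, one_mul]
      congr 1
      exact xiAux_eq_mul p c _ _
    rw [hdec₁, hdec₂]
    have hfil := xiAux_filter p c hp hc0 htri P σ v 1 zero_le_one
    have hX'0 : 0 ≤ xiAux p c 1 (v :: σ.filter (fun x => !P x)) :=
      xiAux_nonneg p c hp hc0 _ _ zero_le_one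
    have hQ₂0 : 0 ≤ (τ₂.map (fun x => 1 - p x)).prod := (prod_one_sub_mem p hp τ₂).1
    have hK0 : 0 ≤ ((σ.filter P).map (fun x => 1 - p x)).prod :=
      (prod_one_sub_mem p hp (σ.filter P)).1
    nlinarith [mul_le_mul_of_nonneg_left hfil hQ₂0,
      mul_le_mul_of_nonneg_right hQle hX'0]
end
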